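/- Substitution theorem for R-expressions (Theorem 1): Let S and T be R-expressions, let U_S be an R-expression containing a designated occurrence of S as an R-subformula, and let U_T be the result of replacing that occurrence of S by T. Then from the four R-expressions constituting S ⇔ˢ T (namely S ⇒ T, T ⇒ S, −S ⇒ −T, −T ⇒ −S) taken as premises, each of the four R-expressions constituting U_S ⇔ˢ U_T is derivable in SC∞; i.e., S ⇔ˢ T ⊢ U_S ⇔ˢ U_T. -/
import Mathlib


/-- Formulas of the connexive logic C: propositional variables, strong
negation `∼`, conjunction, disjunction and implication. -/
inductive Formula : Type
  | var : Nat → Formula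
  | snot : Formula → Formula
  | and : Formula → Formula → Formula
  | or : Formula → Formula → Formula
  | imp : Formula → Formula → Formula
deriving DecidableEq

/-- R-expressions over the language of C.  `fm A` is the formula `A`,
`negFm A` is `−A`, `seq Δ S` is `(Δ ⇒ S)` and `negSeq Δ S` is `−(Δ ⇒ S)`.
The convention `−−S = S` is implemented by the involution `rneg`. -/
inductive RExpr : Type
  | fm : Formula → RExpr
  | negFm : Formula → RExpr
  | seq : List RExpr → RExpr → RExpr
  | negSeq : List RExpr → RExpr → RExpr

/-- The refutation `−S` of an R-expression, with `−−S = S`. -/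
def rneg : RExpr → RExpr
  | .fm A => .negFm A
  | .negFm A => .fm A
  | .seq Δ S => .negSeq Δ S
  | .negSeq Δ S => .seq Δ S

/-- Derivability in the higher-order sequent calculus `SC∞` from a set `P`
of R-expressions taken as additional premises. -/
inductive SC (P : Set RExpr) : RExpr → Prop
  | prem {S} : S ∈ P → SC P S
  | rf (S) : SC P (.seq [S] S)
  | wl {Δ S} (T) : SC P (.seq Δ S) → SC P (.seq (Δ ++ [T]) S)
  | pl {U} (Δ S T Γ) : SC P (.seq (Δ ++ S :: T :: Γ) U) → SC P (.seq (Δ ++ T :: S :: Γ) U)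
  | cl {Δ S T} : SC P (.seq (Δ ++ [S, S]) T) → SC P (.seq (Δ ++ [S]) T)
  | cut {Δ S T} : SC P (.seq Δ S) → SC P (.seq (Δ ++ [S]) T) → SC P (.seq Δ T)
  | riP {Γ Δ S} : SC P (.seq (Γ ++ Δ) S) → SC P (.seq Γ (.seq Δ S))
  | liP {Γ Δ S T} : (∀ U ∈ Δ, SC P (.seq Γ U)) → SC P (.seq (Γ ++ [S]) T) →
      SC P (.seq (Γ ++ [.seq Δ S]) T)
  | riN {Δ Γ S} : SC P (.seq (Δ ++ Γ) (rneg S)) → SC P (.seq Δ (rneg (.seq Γ S)))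
  | riN' {Δ Γ S} : SC P (.seq Δ (rneg (.seq Γ S))) → SC P (.seq (Δ ++ Γ) (rneg S))
  | liN {Δ Γ S T} : (∀ U ∈ Γ, SC P (.seq Δ U)) → SC P (.seq (Δ ++ [rneg S]) T) →
      SC P (.seq (Δ ++ [rneg (.seq Γ S)]) T)
  | snotL {Δ A S} : SC P (.seq (Δ ++ [.negFm A]) S) → SC P (.seq (Δ ++ [.fm (.snot A)]) S)
  | snotR {Δ A} : SC P (.seq Δ (.negFm A)) → SC P (.seq Δ (.fm (.snot A)))
  | snotLm {Δ A S} : SC P (.seq (Δ ++ [.fm A]) S) → SC P (.seq (Δ ++ [.negFm (.snot A)]) S)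
  | snotRm {Δ A} : SC P (.seq Δ (.fm A)) → SC P (.seq Δ (.negFm (.snot A)))
  | andL {Δ A B S} : SC P (.seq (Δ ++ [.fm A, .fm B]) S) → SC P (.seq (Δ ++ [.fm (.and A B)]) S)
  | andR {Δ A B} : SC P (.seq Δ (.fm A)) → SC P (.seq Δ (.fm B)) → SC P (.seq Δ (.fm (.and A B)))
  | andLm {Δ A B S} : SC P (.seq (Δ ++ [.negFm A]) S) → SC P (.seq (Δ ++ [.negFm B]) S) →
      SC P (.seq (Δ ++ [.negFm (.and A B)]) S)
  | andRm₁ {Δ A B} : SC P (.seq Δ (.negFm A)) → SC P (.seq Δ (.negFm (.and A B)))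
  | andRm₂ {Δ A B} : SC P (.seq Δ (.negFm B)) → SC P (.seq Δ (.negFm (.and A B)))
  | orL {Δ A B S} : SC P (.seq (Δ ++ [.fm A]) S) → SC P (.seq (Δ ++ [.fm B]) S) →
      SC P (.seq (Δ ++ [.fm (.or A B)]) S)
  | orR₁ {Δ A B} : SC P (.seq Δ (.fm A)) → SC P (.seq Δ (.fm (.or A B)))
  | orR₂ {Δ A B} : SC P (.seq Δ (.fm B)) → SC P (.seq Δ (.fm (.or A B)))
  | orLm {Δ A B S} : SC P (.seq (Δ ++ [.negFm A, .negFm B]) S) →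
      SC P (.seq (Δ ++ [.negFm (.or A B)]) S)
  | orRm {Δ A B} : SC P (.seq Δ (.negFm A)) → SC P (.seq Δ (.negFm B)) →
      SC P (.seq Δ (.negFm (.or A B)))
  | impL {Δ A B S} : SC P (.seq (Δ ++ [.seq [.fm A] (.fm B)]) S) →
      SC P (.seq (Δ ++ [.fm (.imp A B)]) S)
  | impR {Δ A B} : SC P (.seq Δ (.seq [.fm A] (.fm B))) → SC P (.seq Δ (.fm (.imp A B)))
  | impLm {Δ A B S} : SC P (.seq (Δ ++ [.negSeq [.fm A] (.fm B)]) S) →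
      SC P (.seq (Δ ++ [.negFm (.imp A B)]) S)
  | impRm {Δ A B} : SC P (.seq Δ (.negSeq [.fm A] (.fm B))) → SC P (.seq Δ (.negFm (.imp A B)))

/-- `S ⇔ˢ T` relative to the premise set `P`: the four R-expressions
`S ⇒ T`, `T ⇒ S`, `−S ⇒ −T`, `−T ⇒ −S` are each derivable from `P`. -/
def StrictEquiv (P : Set RExpr) (S T : RExpr) : Prop :=
  SC P (.seq [S] T) ∧ SC P (.seq [T] S) ∧
  SC P (.seq [rneg S] (rneg T)) ∧ SC P (.seq [rneg T] (rneg S))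

/-- The four R-expressions constituting `S ⇔ˢ T`, taken as premises. -/
def equivPrems (S T : RExpr) : Set RExpr :=
  {RExpr.seq [S] T, RExpr.seq [T] S, RExpr.seq [rneg S] (rneg T), RExpr.seq [rneg T] (rneg S)}
/-- `Repl S T U V`: `U` contains a designated occurrence of `S` as an
R-subformula, and `V` is the result of replacing that occurrence by `T`. -/
inductive Repl (S T : RExpr) : RExpr → RExpr → Prop
  | here : Repl S T S T
  | neg {U V} : Repl S T U V → Repl S T (rneg U) (rneg V)
  | seqSucc {Δ U V} : Repl S T U V → Repl S T (.seq Δ U) (.seq Δ V)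
  | seqMem {U V W} (Δ Γ) : Repl S T U V →
      Repl S T (.seq (Δ ++ U :: Γ) W) (.seq (Δ ++ V :: Γ) W)

lemma rneg_rneg (S : RExpr) : rneg (rneg S) = S := by cases S <;> rfl

namespace SC

variable {P : Set RExpr}

/-- Weakening by a whole list. -/
lemma wlList {Δ : List RExpr} {S : RExpr} (Ξ : List RExpr) (h : SC P (.seq Δ S)) :
    SC P (.seq (Δ ++ Ξ) S) := by
  induction Ξ generalizing Δ with
  | nil => simpa using h
  | cons a Ξ ih =>
      have := ih (Δ := Δ ++ [a]) (SC.wl a h)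
      simpa using this

/-- Permutation (admissible, arbitrary permutations, with a fixed prefix). -/
lemma permAux {S : RExpr} {l₁ l₂ : List RExpr} (p : l₁.Perm l₂) :
    ∀ Δ : List RExpr, SC P (.seq (Δ ++ l₁) S) → SC P (.seq (Δ ++ l₂) S) := by
  induction p with
  | nil => exact fun Δ h => h
  | cons a p ih =>
      intro Δ h
      have := ih (Δ ++ [a]) (by simpa using h)
      simpa using this
  | swap x y l =>
      intro Δ h
      exact SC.pl Δ y x l h
  | trans p₁ p₂ ih₁ ih₂ =>
      intro Δ h
      exact ih₂ Δ (ih₁ Δ h)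

lemma perm {S : RExpr} {l₁ l₂ : List RExpr} (p : l₁.Perm l₂) (h : SC P (.seq l₁ S)) :
    SC P (.seq l₂ S) := by
  have := permAux (P := P) p [] (by simpa using h)
  simpa using this

/-- Contraction of a trailing element already present in the list. -/
lemma contrMem {Δ : List RExpr} {S e : RExpr} (he : e ∈ Δ)
    (h : SC P (.seq (Δ ++ [e]) S)) : SC P (.seq Δ S) := by
  obtain ⟨Ξ, Θ, rfl⟩ := List.append_of_mem he
  have p1 : ((Ξ ++ e :: Θ) ++ [e]).Perm ((Ξ ++ Θ) ++ [e, e]) := by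
    have : (e :: (Θ ++ [e])).Perm (Θ ++ [e, e]) := by
      have := (List.perm_append_comm (l₁ := [e]) (l₂ := Θ)).append_right [e]
      simpa using this
    have e1 : ((Ξ ++ e :: Θ) ++ [e]).Perm (Ξ ++ (e :: (Θ ++ [e]))) := by simp
    have e2 : (Ξ ++ (e :: (Θ ++ [e]))).Perm (Ξ ++ (Θ ++ [e, e])) := this.append_left Ξ
    have e3 : (Ξ ++ (Θ ++ [e, e])).Perm ((Ξ ++ Θ) ++ [e, e]) := by simp
    exact (e1.trans e2).trans e3
  have h2 : SC P (.seq ((Ξ ++ Θ) ++ [e, e]) S) := perm p1 h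
  have h3 : SC P (.seq ((Ξ ++ Θ) ++ [e]) S) := SC.cl h2
  have p2 : ((Ξ ++ Θ) ++ [e]).Perm (Ξ ++ e :: Θ) := by
    have : (Θ ++ [e]).Perm (e :: Θ) := List.perm_append_comm
    have e1 : ((Ξ ++ Θ) ++ [e]).Perm (Ξ ++ (Θ ++ [e])) := by simp
    exact e1.trans (this.append_left Ξ)
  exact perm p2 h3

/-- Monotonicity: antecedents may be treated as sets. -/
lemma mono {Δ Δ' : List RExpr} {S : RExpr} (hsub : ∀ e ∈ Δ, e ∈ Δ')
    (h : SC P (.seq Δ S)) : SC P (.seq Δ' S) := by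
  have key : ∀ Θ : List RExpr, (∀ e ∈ Θ, e ∈ Δ') → SC P (.seq (Θ ++ Δ') S) →
      SC P (.seq Δ' S) := by
    intro Θ
    induction Θ with
    | nil => intro _ h; simpa using h
    | cons a Θ ih =>
        intro hΘ h
        have p : (a :: (Θ ++ Δ')).Perm ((Θ ++ Δ') ++ [a]) := by
          simpa using (List.perm_append_comm (l₁ := [a]) (l₂ := Θ ++ Δ'))
        have h1 : SC P (.seq ((Θ ++ Δ') ++ [a]) S) := perm p (by simpa using h)
        have ha : a ∈ Θ ++ Δ' := by
          exact List.mem_append.mpr (Or.inr (hΘ a (by simp)))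
        exact ih (fun e he => hΘ e (by simp [he])) (contrMem ha h1)
  exact key Δ hsub (wlList Δ' h)

/-- Axiom: any member of the antecedent is derivable. -/
lemma ax {Δ : List RExpr} {e : RExpr} (he : e ∈ Δ) : SC P (.seq Δ e) :=
  mono (by simpa using he) (SC.rf e)

/-- From `X ⇒ Y` and `X ∈ Δ` infer `Δ ⇒ Y`. -/
lemma ofSingle {Δ : List RExpr} {X Y : RExpr} (h : SC P (.seq [X] Y)) (hX : X ∈ Δ) :
    SC P (.seq Δ Y) :=
  SC.cut (ax hX) (mono (by simp) h)

/-- Key lemma for sequents: positive version. -/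
lemma seqKey {Ξ₁ Ξ₂ : List RExpr} {Y Z : RExpr}
    (h₁ : ∀ X ∈ Ξ₁, SC P (.seq Ξ₂ X)) (h₂ : SC P (.seq (Ξ₂ ++ [Y]) Z)) :
    SC P (.seq [.seq Ξ₁ Y] (.seq Ξ₂ Z)) := by
  have h3 : SC P (.seq (Ξ₂ ++ [.seq Ξ₁ Y]) Z) := SC.liP h₁ h₂
  have h4 : SC P (.seq ([RExpr.seq Ξ₁ Y] ++ Ξ₂) Z) := mono (by intro e he; simp at he ⊢; tauto) h3
  exact SC.riP h4

/-- Key lemma for sequents: negative version. -/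
lemma seqKeyNeg {Ξ₁ Ξ₂ : List RExpr} {Y Z : RExpr}
    (h₁ : ∀ X ∈ Ξ₁, SC P (.seq Ξ₂ X)) (h₂ : SC P (.seq (Ξ₂ ++ [rneg Y]) (rneg Z))) :
    SC P (.seq [rneg (.seq Ξ₁ Y)] (rneg (.seq Ξ₂ Z))) := by
  have h3 : SC P (.seq (Ξ₂ ++ [rneg (.seq Ξ₁ Y)]) (rneg Z)) := SC.liN h₁ h₂
  have h4 : SC P (.seq ([rneg (RExpr.seq Ξ₁ Y)] ++ Ξ₂) (rneg Z)) :=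
    mono (by intro e he; simp at he ⊢; tauto) h3
  exact SC.riN h4

end SC

/-- Theorem 1 (substitution theorem for R-expressions):
`S ⇔ˢ T ⊢ U_S ⇔ˢ U_T`. -/
theorem substitution_R_expressions (S T US UT : RExpr) (h : Repl S T US UT) :
    StrictEquiv (equivPrems S T) US UT := by
  induction h with
  | here =>
      refine ⟨SC.prem ?_, SC.prem ?_, SC.prem ?_, SC.prem ?_⟩ <;> simp [equivPrems]
  | neg h ih =>
      obtain ⟨h1, h2, h3, h4⟩ := ih
      exact ⟨h3, h4, by simpa [rneg_rneg] using h1, by simpa [rneg_rneg] using h2⟩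
  | @seqSucc Δ U V h ih =>
      obtain ⟨h1, h2, h3, h4⟩ := ih
      refine ⟨?_, ?_, ?_, ?_⟩
      · exact SC.seqKey (fun X hX => SC.ax hX) (SC.ofSingle h1 (by simp))
      · exact SC.seqKey (fun X hX => SC.ax hX) (SC.ofSingle h2 (by simp))
      · exact SC.seqKeyNeg (fun X hX => SC.ax hX) (SC.ofSingle h3 (by simp))
      · exact SC.seqKeyNeg (fun X hX => SC.ax hX) (SC.ofSingle h4 (by simp))
  | @seqMem U V W Δ Γ h ih =>
      obtain ⟨h1, h2, h3, h4⟩ := ih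
      have mem₁ : ∀ X ∈ Δ ++ U :: Γ, SC (equivPrems S T) (.seq (Δ ++ V :: Γ) X) := by
        intro X hX
        simp only [List.mem_append, List.mem_cons] at hX
        rcases hX with hX | hX | hX
        · exact SC.ax (by simp [hX])
        · subst hX; exact SC.ofSingle h2 (by simp)
        · exact SC.ax (by simp [hX])
      have mem₂ : ∀ X ∈ Δ ++ V :: Γ, SC (equivPrems S T) (.seq (Δ ++ U :: Γ) X) := by
        intro X hX
        simp only [List.mem_append, List.mem_cons] at hX
        rcases hX with hX | hX | hX
        · exact SC.ax (by simp [hX])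
        · subst hX; exact SC.ofSingle h1 (by simp)
        · exact SC.ax (by simp [hX])
      refine ⟨?_, ?_, ?_, ?_⟩
      · exact SC.seqKey mem₁ (SC.ax (by simp))
      · exact SC.seqKey mem₂ (SC.ax (by simp))
      · exact SC.seqKeyNeg mem₁ (SC.ax (by simp))
      · exact SC.seqKeyNeg mem₂ (SC.ax (by simp))
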